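/- Define a sequence P'_n by P'_1 := J_{2,1} ⊗ K_2 ⊗ J_{t,2t} and, for n ≥ 2, P'_n := J_{2^n,1} ⊗ K_2 ⊗ α_{2^{n−1}}(P'_{n−1}) ⊗ J_{1,2}. Then P'_n = P_n for every n ≥ 1. -/

import Mathlib

open Matrix Kronecker

def Jmat (m l : ℕ) : Matrix (Fin m) (Fin l) ℤ := Matrix.of fun _ _ => 1
def Kmat (m : ℕ) : Matrix (Fin m) (Fin m) ℤ :=
  Matrix.of fun i j => if (j : ℕ) = m - 1 - (i : ℕ) then 1 else 0
def kron {m n p q : ℕ} (A : Matrix (Fin m) (Fin n) ℤ) (B : Matrix (Fin p) (Fin q) ℤ) :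
    Matrix (Fin (m * p)) (Fin (n * q)) ℤ :=
  Matrix.reindex finProdFinEquiv finProdFinEquiv (A ⊗ₖ B)
def castM {m n m' n' : ℕ} (hm : m = m') (hn : n = n') (A : Matrix (Fin m) (Fin n) ℤ) :
    Matrix (Fin m') (Fin n') ℤ :=
  Matrix.reindex (finCongr hm) (finCongr hn) A
def alphaM {m l : ℕ} (s : ℕ) (X : Matrix (Fin m) (Fin l) ℤ) :
    Matrix (Fin (m / s)) (Fin l) ℤ :=
  Matrix.of fun i j => X (Fin.castLE (Nat.div_le_self m s) i) j
def vstack {m₁ m₂ l : ℕ} (X : Matrix (Fin m₁) (Fin l) ℤ) (Y : Matrix (Fin m₂) (Fin l) ℤ) :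
    Matrix (Fin (m₁ + m₂)) (Fin l) ℤ :=
  Matrix.reindex finSumFinEquiv (Equiv.refl _) (Matrix.fromRows X Y)
def hstack {m l₁ l₂ : ℕ} (X : Matrix (Fin m) (Fin l₁) ℤ) (Y : Matrix (Fin m) (Fin l₂) ℤ) :
    Matrix (Fin m) (Fin (l₁ + l₂)) ℤ :=
  Matrix.reindex (Equiv.refl _) finSumFinEquiv (Matrix.fromCols X Y)
def block2 {a b c d : ℕ} (A : Matrix (Fin a) (Fin c) ℤ) (B : Matrix (Fin a) (Fin d) ℤ)
    (C : Matrix (Fin b) (Fin c) ℤ) (D : Matrix (Fin b) (Fin d) ℤ) :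
    Matrix (Fin (a + b)) (Fin (c + d)) ℤ :=
  Matrix.reindex finSumFinEquiv finSumFinEquiv (Matrix.fromBlocks A B C D)
lemma four_pow_eq (n : ℕ) : (4 : ℕ) ^ n = 2 ^ n * 2 ^ n := by
  rw [show (4 : ℕ) = 2 * 2 from rfl, mul_pow]
lemma t_four_pow_div (t n : ℕ) : t * 4 ^ n / 2 ^ n = t * 2 ^ n := by
  rw [four_pow_eq, ← mul_assoc, Nat.mul_div_cancel _ (by positivity)]
def vnum (v t n : ℕ) : ℕ := (v + (2 ^ (n + 1) - 4) * t) * 2 ^ (n - 1)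
lemma vnum_one (v t : ℕ) : vnum v t 1 = v := by norm_num [vnum]
lemma vnum_succ (v t n : ℕ) :
    vnum v t (n + 2) = 2 * vnum v t (n + 1) + 2 * (t * 4 ^ (n + 1)) := by
  unfold vnum
  simp only [show n + 2 + 1 = n + 3 from rfl, show n + 2 - 1 = n + 1 from rfl,
    show n + 1 + 1 = n + 2 from rfl, show n + 1 - 1 = n from rfl]
  have h2 : (4 : ℕ) ≤ 2 ^ (n + 2) := by
    calc (4 : ℕ) = 2 ^ 2 := rfl
    _ ≤ 2 ^ (n + 2) := Nat.pow_le_pow_right (by norm_num) (by omega)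
  have h3 : (4 : ℕ) ≤ 2 ^ (n + 3) := le_trans h2 (Nat.pow_le_pow_right (by norm_num) (by omega))
  rw [four_pow_eq]
  zify [h2, h3]
  ring
def Pmat (t n : ℕ) : Matrix (Fin (t * 4 ^ n)) (Fin (t * 4 ^ n)) ℤ :=
  castM (by rw [four_pow_eq]; ring) (by rw [four_pow_eq]; ring)
    (kron (kron (Jmat (2 ^ n) 1) (Kmat (2 ^ n))) (Jmat t (t * 2 ^ n)))
def Pone (t : ℕ) : Matrix (Fin (4 * t)) (Fin (4 * t)) ℤ :=
  castM (by ring) (by ring) (kron (kron (Jmat 2 1) (Kmat 2)) (Jmat t (2 * t)))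

/-- The recursively defined sequence `P'_n` of Lemma 2. -/
def P'mat (t : ℕ) : (n : ℕ) → Matrix (Fin (t * 4 ^ n)) (Fin (t * 4 ^ n)) ℤ
  | 0 => 0
  | 1 => castM (by ring) (by ring) (kron (kron (Jmat 2 1) (Kmat 2)) (Jmat t (2 * t)))
  | (n + 2) =>
      castM
        (by rw [t_four_pow_div, four_pow_eq]; ring)
        (by ring)
        (kron (kron (kron (Jmat (2 ^ (n + 2)) 1) (Kmat 2))
          (alphaM (2 ^ (n + 1)) (P'mat t (n + 1)))) (Jmat 1 2))

/-- The recursively defined sequence `B_n` (with `B_1` given). -/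
def Bmat (t v : ℕ) (B₁ : Matrix (Fin v) (Fin (4 * t)) ℤ) :
    (n : ℕ) → Matrix (Fin (vnum v t n)) (Fin (t * 4 ^ n)) ℤ
  | 0 => 0
  | 1 => castM (vnum_one v t).symm (by ring) B₁
  | (n + 2) =>
      castM (by rw [vnum_succ]; try ring) (by ring)
        (vstack (kron (kron (Kmat 2) (Bmat t v B₁ (n + 1))) (Jmat 1 2))
          (kron (kron (1 : Matrix (Fin 2) (Fin 2) ℤ) (Pmat t (n + 1))) (Jmat 1 2)))

/-- The recursively defined sequence `C_n` (with `C_1` given). -/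
def Cmat (t v : ℕ) (C₁ : Matrix (Fin (4 * t)) (Fin v) ℤ) :
    (n : ℕ) → Matrix (Fin (t * 4 ^ n)) (Fin (vnum v t n)) ℤ
  | 0 => 0
  | 1 => castM (by ring) (vnum_one v t).symm C₁
  | (n + 2) =>
      castM (by rw [t_four_pow_div, four_pow_eq]; ring) (by rw [vnum_succ]; try ring)
        (hstack
          (kron (kron (Jmat (2 ^ (n + 2)) 1) (1 : Matrix (Fin 2) (Fin 2) ℤ))
            (alphaM (2 ^ (n + 1)) (Cmat t v C₁ (n + 1))))
          (kron (kron (Jmat (2 ^ (n + 2)) 1) (1 : Matrix (Fin 2) (Fin 2) ℤ))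
            (alphaM (2 ^ (n + 1)) (Pmat t (n + 1)))))

/-- The recursively defined sequence `A_n` (with `A_1`, `B_1`, `C_1` given). -/
def Amat (t v : ℕ) (A₁ : Matrix (Fin v) (Fin v) ℤ) (B₁ : Matrix (Fin v) (Fin (4 * t)) ℤ)
    (C₁ : Matrix (Fin (4 * t)) (Fin v) ℤ) :
    (n : ℕ) → Matrix (Fin (vnum v t n)) (Fin (vnum v t n)) ℤ
  | 0 => 0
  | 1 => castM (vnum_one v t).symm (vnum_one v t).symm A₁
  | (n + 2) =>
      castM (by rw [vnum_succ]) (by rw [vnum_succ])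
        (block2 (kron (1 : Matrix (Fin 2) (Fin 2) ℤ) (Amat t v A₁ B₁ C₁ (n + 1)))
          (kron (1 : Matrix (Fin 2) (Fin 2) ℤ) (Bmat t v B₁ (n + 1)))
          (kron (Kmat 2) (Cmat t v C₁ (n + 1)))
          (kron (Kmat 2) (Pmat t (n + 1))))


lemma kron_apply' {m n p q : ℕ} (A : Matrix (Fin m) (Fin n) ℤ) (B : Matrix (Fin p) (Fin q) ℤ)
    (i : Fin (m * p)) (j : Fin (n * q)) :
    kron A B i j = A (Fin.divNat i) (Fin.divNat j) * B (Fin.modNat i) (Fin.modNat j) := rfl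

lemma castM_apply' {m n m' n' : ℕ} (hm : m = m') (hn : n = n')
    (A : Matrix (Fin m) (Fin n) ℤ) (i : Fin m') (j : Fin n') :
    castM hm hn A i j = A (Fin.cast hm.symm i) (Fin.cast hn.symm j) := rfl

lemma Pmat_apply' (t n : ℕ) (i j : Fin (t * 4 ^ n)) :
    Pmat t n i j =
      if ((j : ℕ) / (t * 2 ^ n)) % 2 ^ n = 2 ^ n - 1 - (((i : ℕ) / t) % 2 ^ n) then 1 else 0 := by
  simp [Pmat, castM_apply', kron_apply', Jmat, Kmat, Fin.coe_divNat, Fin.coe_modNat]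
  rfl

lemma core_arith' (m u w : ℕ) (hm : 0 < m) (hw : w < 2 * m) :
    ((w / m) % 2 = 1 - (u / m) % 2 ∧ w % m = m - 1 - u % m) ↔
      w = 2 * m - 1 - (u % (2 * m)) := by
  have h1 : u % (2 * m) = ((u / m) % 2) * m + u % m := by
    rw [mul_comm 2 m, Nat.mod_mul]; ring
  rw [h1]
  have hw0 : w % m < m := Nat.mod_lt _ hm
  have hu0 : u % m < m := Nat.mod_lt _ hm
  have hw1 : w / m < 2 := Nat.div_lt_of_lt_mul (by omega)
  have hwe : (w / m) * m + w % m = w := by rw [mul_comm]; exact Nat.div_add_mod w m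
  have he : (u / m) % 2 < 2 := Nat.mod_lt _ (by norm_num)
  generalize u % m = u₀ at *
  generalize (u / m) % 2 = e at *
  generalize hW : w / m = w₁ at *
  generalize w % m = w₀ at *
  have hW2 : w₁ % 2 = w₁ := Nat.mod_eq_of_lt hw1
  rw [hW2]
  interval_cases w₁ <;> interval_cases e <;> omega

lemma step_arith' (t m i j : ℕ) (hm : 0 < m)
    (hj : j < t * (2 * m) * (2 * m)) :
    ((if j / 2 / (t * (m * m)) % 2 = 2 - 1 - i / (t * m) % 2 then (1 : ℤ) else 0) *
      if j / 2 % (t * (m * m)) / (t * m) % m = m - 1 - i % (t * m) / t % m then 1 else 0) =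
    if j / (t * (2 * m)) % (2 * m) = 2 * m - 1 - i / t % (2 * m) then 1 else 0 := by
  have e1 : j / 2 / (t * (m * m)) = j / (2 * t) / m / m := by
    rw [Nat.div_div_eq_div_mul, Nat.div_div_eq_div_mul, Nat.div_div_eq_div_mul]
    congr 1; ring
  have e2 : j / 2 % (t * (m * m)) / (t * m) = j / (2 * t) / m % m := by
    rw [show t * (m * m) = (t * m) * m by ring, Nat.mod_mul_right_div_self,
      Nat.div_div_eq_div_mul, Nat.div_div_eq_div_mul]
    congr 2; ring
  have e3 : i / (t * m) = i / t / m := (Nat.div_div_eq_div_mul i t m).symm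
  have e4 : i % (t * m) / t = i / t % m := Nat.mod_mul_right_div_self i t m
  have e5 : j / (t * (2 * m)) = j / (2 * t) / m := by
    rw [Nat.div_div_eq_div_mul]; congr 1; ring
  rw [e1, e2, e3, e4, e5]
  set u := i / t with hu
  set v := j / (2 * t) with hv
  have hvlt : v < 2 * m * m := by
    rw [hv]
    apply Nat.div_lt_of_lt_mul
    calc j < t * (2 * m) * (2 * m) := hj
    _ = 2 * t * (2 * m * m) := by ring
  have hw : v / m < 2 * m := Nat.div_lt_of_lt_mul (by calc v < 2 * m * m := hvlt
    _ = m * (2 * m) := by ring)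
  set w := v / m with hwdef
  have hww : w % (2 * m) = w := Nat.mod_eq_of_lt hw
  have hmm1 : u % m % m = u % m := Nat.mod_mod_of_dvd u dvd_rfl
  have hmm2 : w % m % m = w % m := Nat.mod_mod_of_dvd w dvd_rfl
  rw [hww, hmm1, hmm2]
  norm_num
  have hcore := core_arith' m u w hm hw
  split_ifs with h1 h2 h3 <;> tauto

lemma P'mat_eq_Pmat_aux (t : ℕ) (ht : 0 < t) : ∀ k, P'mat t (k + 1) = Pmat t (k + 1) := by
  intro k
  induction k with
  | zero =>
      ext i j
      rw [Pmat_apply']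
      simp only [P'mat, castM_apply', kron_apply', Jmat, Kmat, Matrix.of_apply,
        Fin.coe_divNat, Fin.coe_modNat, Fin.coe_cast, one_mul, mul_one]
      norm_num [mul_comm]
  | succ k ih =>
      ext i j
      rw [Pmat_apply']
      have hj : (j : ℕ) < t * (2 * 2 ^ (k + 1)) * (2 * 2 ^ (k + 1)) := by
        have := j.isLt
        calc (j : ℕ) < t * 4 ^ (k + 2) := this
        _ = t * (2 * 2 ^ (k + 1)) * (2 * 2 ^ (k + 1)) := by rw [four_pow_eq]; ring
      simp only [P'mat, castM_apply', kron_apply', alphaM, Matrix.of_apply, ih, Pmat_apply',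
        Jmat, Kmat, Fin.coe_divNat, Fin.coe_modNat, Fin.coe_cast, Fin.coe_castLE,
        one_mul, mul_one]
      simp only [Nat.div_one, t_four_pow_div]
      simp only [four_pow_eq (k + 1),
        show (2 : ℕ) ^ (k + 1 + 1) = 2 * 2 ^ (k + 1) from by ring]
      exact step_arith' t (2 ^ (k + 1)) i j (by positivity) hj

/-- Lemma 2: the recursively defined sequence `P'_n` coincides with `P_n`. -/
theorem P'mat_eq_Pmat (t n : ℕ) (ht : 0 < t) (hn : 1 ≤ n) :
    P'mat t n = Pmat t n := by
  obtain ⟨k, rfl⟩ : ∃ k, n = k + 1 := ⟨n - 1, by omega⟩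
  exact P'mat_eq_Pmat_aux t ht k
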